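/- Let k ≥ 2, t ≥ 2, n > k, and let F ⊆ [t]^n be an induced A_k-free, induced A_k-saturated family, where A_k is the antichain on k elements. Then F is the union of at most k−1 maximal chains of [t]^n; in particular (t−1)n + 1 ≤ |F| ≤ (k−1)(t−1)n − k + 3. -/

import Mathlib

open Filter

/-- An induced copy of the poset `P` inside the family `F`. -/
def InducedCopy (P : Type) [PartialOrder P] {α : Type} [PartialOrder α]
    (F : Set α) : Prop :=
  ∃ φ : P → α, Function.Injective φ ∧ (∀ x, φ x ∈ F) ∧ ∀ x y, φ x ≤ φ y ↔ x ≤ y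

/-- `F` is induced `P`-free. -/
def PFree (P : Type) [PartialOrder P] {α : Type} [PartialOrder α] (F : Set α) : Prop :=
  ¬ InducedCopy P F

/-- `F` is induced `P`-free and induced `P`-saturated. -/
def PSaturated (P : Type) [PartialOrder P] {α : Type} [PartialOrder α] (F : Set α) : Prop :=
  PFree P F ∧ ∀ g ∉ F, InducedCopy P (insert g F)

/-- The lifting operator `L_i`, copying coordinate `i` into a new last coordinate. -/
def lift {t n : ℕ} (i : Fin n) (f : Fin n → Fin t) : Fin (n + 1) → Fin t :=
  Fin.snoc f (f i)

/-- The coordinate-dropping operator `D_i`. -/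
def drop {t n : ℕ} (i : Fin (n + 1)) (f : Fin (n + 1) → Fin t) : Fin n → Fin t :=
  fun x => f (i.succAbove x)

/-- Coordinate `i` is separating for `F`. -/
def Separating {t n : ℕ} (F : Set (Fin n → Fin t)) (i : Fin n) : Prop :=
  ∃ f ∈ F, ∃ f' ∈ F, f ≠ f' ∧ (∀ x, x ≠ i → f x ≤ f' x) ∧ f' i < f i

/-- The induced saturation number `sat*([t]^n, P)`. -/
noncomputable def satStar (t n : ℕ) (P : Type) [PartialOrder P] : ℕ :=
  sInf {m | ∃ F : Set (Fin n → Fin t), PSaturated P F ∧ F.ncard = m}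

/-- The antichain on `k` elements. -/
def AC (k : ℕ) := Fin k

instance (k : ℕ) : PartialOrder (AC k) where
  le := Eq
  le_refl _ := rfl
  le_trans _ _ _ h h' := Eq.trans h h'
  le_antisymm _ _ h _ := h

/-- The unique cover twin property. -/
def UCTP (P : Type) [PartialOrder P] : Prop :=
  ∀ x y : P, y ⋖ x → ∃ y', y' ≠ y ∧ y' ≠ x ∧ y' ⋖ x



section Aux
variable {α : Type*} [PartialOrder α]

lemma chain_greatest (T : Finset α) (hT : T.Nonempty)
    (hc : ∀ x ∈ T, ∀ y ∈ T, x ≤ y ∨ y ≤ x) :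
    ∃ a ∈ T, ∀ x ∈ T, x ≤ a := by
  obtain ⟨m, hm, hmax⟩ := T.exists_maximal hT
  refine ⟨m, hm, fun x hx => ?_⟩
  rcases hc x hx m hm with h | h
  · exact h
  · rcases eq_or_lt_of_le h with h' | h'
    · exact h'.ge
    · exact absurd (h'.trans_le (hmax hx h'.le)) (lt_irrefl _)

lemma chain_least (T : Finset α) (hT : T.Nonempty)
    (hc : ∀ x ∈ T, ∀ y ∈ T, x ≤ y ∨ y ≤ x) :
    ∃ a ∈ T, ∀ x ∈ T, a ≤ x := by
  obtain ⟨m, hm, hmin⟩ := T.exists_minimal hT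
  refine ⟨m, hm, fun x hx => ?_⟩
  rcases hc x hx m hm with h | h
  · rcases eq_or_lt_of_le h with h' | h'
    · exact h'.ge
    · exact absurd (h'.trans_le (hmin hx h'.le)) (lt_irrefl _)
  · exact h

lemma dilworth (S : Finset α) :
    ∀ k : ℕ, (∀ A : Finset α, A ⊆ S → IsAntichain (· ≤ ·) (A : Set α) → A.card ≤ k) →
    ∃ g : α → ℕ, (∀ x ∈ S, g x < k) ∧
      ∀ x ∈ S, ∀ y ∈ S, g x = g y → x ≤ y ∨ y ≤ x := by
  induction S using Finset.strongInduction with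
  | _ S IH =>
    intro k hbound
    classical
    rcases S.eq_empty_or_nonempty with rfl | hS
    · exact ⟨fun _ => 0, by simp, by simp⟩
    obtain ⟨a, haS, hamax⟩ := S.exists_maximal hS
    have hk0 : 0 < k := by
      have h1 := hbound {a} (by simpa) (by simp [IsAntichain, Set.Pairwise])
      simp at h1; omega
    set S' := S.erase a with hS'def
    have hS'ss : S' ⊂ S := Finset.erase_ssubset haS
    have hS'sub : S' ⊆ S := Finset.erase_subset _ _
    obtain ⟨g, hglt, hgcomp⟩ := IH S' hS'ss k
      (fun A hA hanti => hbound A (hA.trans hS'sub) hanti)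
    by_cases hbig : ∃ A : Finset α, A ⊆ S' ∧ IsAntichain (· ≤ ·) (A : Set α) ∧ A.card = k
    · obtain ⟨A0, hA0S, hA0anti, hA0card⟩ := hbig
      have hmeet : ∀ (A : Finset α), A ⊆ S' → IsAntichain (· ≤ ·) (A : Set α) → A.card = k →
          ∀ i < k, ∃ x ∈ A, g x = i := by
        intro A hAS hAanti hAcard i hi
        by_contra hno
        push_neg at hno
        have hinj : Set.InjOn g A := by
          intro x hx y hy hxy
          by_contra hne
          rcases hgcomp x (hAS hx) y (hAS hy) hxy with h | h
          · exact hAanti hx hy hne h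
          · exact hAanti hy hx (Ne.symm hne) h
        have himg : A.image g ⊆ (Finset.range k).erase i := by
          intro j hj
          simp only [Finset.mem_image] at hj
          obtain ⟨x, hx, rfl⟩ := hj
          exact Finset.mem_erase.2 ⟨fun h => hno x hx h, Finset.mem_range.2 (hglt x (hAS hx))⟩
        have h1 := Finset.card_le_card himg
        rw [Finset.card_image_of_injOn hinj, hAcard] at h1
        have h2 : ((Finset.range k).erase i).card = k - 1 := by
          rw [Finset.card_erase_of_mem (Finset.mem_range.2 hi), Finset.card_range]
        omega
      set T : Finset α := S'.filter (fun x => ∃ B : Finset α,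
        B ⊆ S' ∧ IsAntichain (· ≤ ·) (B : Set α) ∧ B.card = k ∧ x ∈ B) with hTdef
      have haa : ∀ i, i < k → ∃ b, (b ∈ T ∧ g b = i) ∧ ∀ x ∈ T, g x = i → x ≤ b := by
        intro i hi
        have hne : (T.filter (fun x => g x = i)).Nonempty := by
          obtain ⟨x, hxA, hgx⟩ := hmeet A0 hA0S hA0anti hA0card i hi
          exact ⟨x, Finset.mem_filter.2 ⟨Finset.mem_filter.2
            ⟨hA0S hxA, A0, hA0S, hA0anti, hA0card, hxA⟩, hgx⟩⟩
        obtain ⟨b, hb, hbmax⟩ := chain_greatest _ hne (fun x hx y hy => by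
          rcases Finset.mem_filter.1 hx with ⟨hx', hgx⟩
          rcases Finset.mem_filter.1 hy with ⟨hy', hgy⟩
          exact hgcomp x (Finset.mem_filter.1 hx').1 y (Finset.mem_filter.1 hy').1
            (hgx.trans hgy.symm))
        rcases Finset.mem_filter.1 hb with ⟨hbT, hgb⟩
        exact ⟨b, ⟨hbT, hgb⟩, fun x hx hgx => hbmax x (Finset.mem_filter.2 ⟨hx, hgx⟩)⟩
      choose aa haa1 haa2 using haa
      set a' : ℕ → α := fun i => if h : i < k then aa i h else aa 0 hk0 with ha'def
      have ha'T : ∀ i, (hi : i < k) → a' i ∈ T ∧ g (a' i) = i := by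
        intro i hi
        simp only [ha'def, dif_pos hi]
        exact haa1 i hi
      have ha'max : ∀ i, (hi : i < k) → ∀ x ∈ T, g x = i → x ≤ a' i := by
        intro i hi
        simp only [ha'def, dif_pos hi]
        exact haa2 i hi
      have ha'S' : ∀ i, i < k → a' i ∈ S' := fun i hi =>
        (Finset.mem_filter.1 (ha'T i hi).1).1
      have hanti' : ∀ i, i < k → ∀ j, j < k → i ≠ j → ¬ a' i ≤ a' j := by
        intro i hi j hj hij hle
        obtain ⟨hTj, hgj⟩ := ha'T j hj
        obtain ⟨hjS', B, hBS, hBanti, hBcard, hjB⟩ := Finset.mem_filter.1 hTj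
        obtain ⟨x, hxB, hgx⟩ := hmeet B hBS hBanti hBcard i hi
        have hxT : x ∈ T := Finset.mem_filter.2 ⟨hBS hxB, B, hBS, hBanti, hBcard, hxB⟩
        have hxa : x ≤ a' i := ha'max i hi x hxT hgx
        have hxj : x ≠ a' j := fun h => hij (by rw [← hgx, h, hgj])
        exact hBanti hxB hjB hxj (hxa.trans hle)
      have hcomp_a : ∃ i, i < k ∧ a' i ≤ a ∧ a' i ≠ a := by
        by_contra hno
        push_neg at hno
        have hinj : Set.InjOn a' (Finset.range k) := by
          intro x hx y hy hxy
          have hx' := Finset.mem_range.1 (Finset.mem_coe.1 hx)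
          have hy' := Finset.mem_range.1 (Finset.mem_coe.1 hy)
          have := (ha'T x hx').2
          rw [hxy, (ha'T y hy').2] at this
          exact this.symm
        have hanot : a ∉ (Finset.range k).image a' := by
          intro h
          obtain ⟨i, hi, hia⟩ := Finset.mem_image.1 h
          have := ha'S' i (Finset.mem_range.1 hi)
          rw [hia] at this
          exact Finset.notMem_erase a S this
        set A1 : Finset α := insert a ((Finset.range k).image a') with hA1def
        have hA1S : A1 ⊆ S := by
          intro x hx
          rcases Finset.mem_insert.1 hx with rfl | hx
          · exact haS
          · obtain ⟨i, hi, rfl⟩ := Finset.mem_image.1 hx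
            exact hS'sub (ha'S' i (Finset.mem_range.1 hi))
        have hA1card : A1.card = k + 1 := by
          rw [hA1def, Finset.card_insert_of_notMem hanot, Finset.card_image_of_injOn hinj,
            Finset.card_range]
        have hA1anti : IsAntichain (· ≤ ·) (A1 : Set α) := by
          intro x hx y hy hxy hle
          simp only [hA1def, Finset.coe_insert, Set.mem_insert_iff, Finset.coe_image,
            Set.mem_image, Finset.mem_coe, Finset.mem_range] at hx hy
          rcases hx with rfl | ⟨i, hi, rfl⟩
          · rcases hy with rfl | ⟨j, hj, rfl⟩
            · exact hxy rfl
            · -- x = a ≤ a' j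
              have hne : x ≠ a' j := fun h => by
                have := ha'S' j hj; rw [← h] at this; exact Finset.notMem_erase x S this
              exact hne (le_antisymm hle (hamax (hS'sub (ha'S' j hj)) hle))
          · rcases hy with rfl | ⟨j, hj, rfl⟩
            · -- a' i ≤ a
              have hne : a' i ≠ y := fun h => by
                have := ha'S' i hi; rw [h] at this; exact Finset.notMem_erase y S this
              exact hne (hno i hi hle)
            · exact hanti' i hi j hj (fun h => hxy (by rw [h])) hle
        have := hbound A1 hA1S hA1anti
        omega
      obtain ⟨i, hik, hia, hine⟩ := hcomp_a
      set K : Finset α := insert a (S'.filter (fun x => g x = i ∧ x ≤ a' i)) with hKdef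
      have haK : a ∈ K := Finset.mem_insert_self _ _
      have hKS : K ⊆ S := by
        intro x hx
        rcases Finset.mem_insert.1 hx with rfl | hx
        · exact haS
        · exact hS'sub (Finset.mem_filter.1 hx).1
      have hKchain : ∀ x ∈ K, ∀ y ∈ K, x ≤ y ∨ y ≤ x := by
        intro x hx y hy
        rcases Finset.mem_insert.1 hx with rfl | hx
        · rcases Finset.mem_insert.1 hy with rfl | hy
          · exact Or.inl le_rfl
          · exact Or.inr ((Finset.mem_filter.1 hy).2.2.trans hia)
        · rcases Finset.mem_insert.1 hy with rfl | hy
          · exact Or.inl ((Finset.mem_filter.1 hx).2.2.trans hia)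
          · obtain ⟨hxS, hgx, _⟩ := Finset.mem_filter.1 hx
            obtain ⟨hyS, hgy, _⟩ := Finset.mem_filter.1 hy
            exact hgcomp x hxS y hyS (hgx.trans hgy.symm)
      set S'' := S \ K with hS''def
      have hS''ss : S'' ⊂ S :=
        Finset.ssubset_iff_of_subset (Finset.sdiff_subset) |>.2
          ⟨a, haS, by simp [hS''def, haK]⟩
      have hbound'' : ∀ A : Finset α, A ⊆ S'' → IsAntichain (· ≤ ·) (A : Set α) →
          A.card ≤ k - 1 := by
        intro A hA hAanti
        have h1 : A.card ≤ k := hbound A (hA.trans Finset.sdiff_subset) hAanti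
        rcases Nat.lt_or_ge A.card k with h | h
        · omega
        have hAcard : A.card = k := le_antisymm h1 h
        exfalso
        have hAS' : A ⊆ S' := by
          intro x hx
          have hx' := hA hx
          rw [hS''def, Finset.mem_sdiff] at hx'
          refine Finset.mem_erase.2 ⟨?_, hx'.1⟩
          intro h'
          exact hx'.2 (h' ▸ haK)
        obtain ⟨x, hxA, hgx⟩ := hmeet A hAS' hAanti hAcard i hik
        have hxT : x ∈ T := Finset.mem_filter.2 ⟨hAS' hxA, A, hAS', hAanti, hAcard, hxA⟩
        have hxle : x ≤ a' i := ha'max i hik x hxT hgx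
        have hxK : x ∈ K := Finset.mem_insert.2 (Or.inr
          (Finset.mem_filter.2 ⟨hAS' hxA, hgx, hxle⟩))
        have := hA hxA
        rw [hS''def, Finset.mem_sdiff] at this
        exact this.2 hxK
      obtain ⟨g2, hg2lt, hg2comp⟩ := IH S'' hS''ss (k - 1) hbound''
      refine ⟨fun x => if x ∈ K then k - 1 else g2 x, ?_, ?_⟩
      · intro x hx
        by_cases hxK : x ∈ K
        · simp only [if_pos hxK]; omega
        · simp only [if_neg hxK]
          have := hg2lt x (Finset.mem_sdiff.2 ⟨hx, hxK⟩)
          omega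
      · intro x hx y hy hxy
        by_cases hxK : x ∈ K <;> by_cases hyK : y ∈ K
        · exact hKchain x hxK y hyK
        · simp only [if_pos hxK, if_neg hyK] at hxy
          have := hg2lt y (Finset.mem_sdiff.2 ⟨hy, hyK⟩)
          omega
        · simp only [if_neg hxK, if_pos hyK] at hxy
          have := hg2lt x (Finset.mem_sdiff.2 ⟨hx, hxK⟩)
          omega
        · simp only [if_neg hxK, if_neg hyK] at hxy
          exact hg2comp x (Finset.mem_sdiff.2 ⟨hx, hxK⟩) y (Finset.mem_sdiff.2 ⟨hy, hyK⟩) hxy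
    · -- no k-antichain in S': S' colorable with k-1 colors, a gets color k-1
      push_neg at hbig
      have hbound' : ∀ A : Finset α, A ⊆ S' → IsAntichain (· ≤ ·) (A : Set α) →
          A.card ≤ k - 1 := by
        intro A hA hAanti
        have h1 : A.card ≤ k := hbound A (hA.trans hS'sub) hAanti
        rcases Nat.lt_or_ge A.card k with h | h
        · omega
        · exact absurd (le_antisymm h1 h) (fun hc => by exact hbig A hA hAanti hc)
      obtain ⟨g2, hg2lt, hg2comp⟩ := IH S' hS'ss (k - 1) hbound'
      refine ⟨fun x => if x = a then k - 1 else g2 x, ?_, ?_⟩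
      · intro x hx
        by_cases hxa : x = a
        · simp only [if_pos hxa]; omega
        · simp only [if_neg hxa]
          have := hg2lt x (Finset.mem_erase.2 ⟨hxa, hx⟩)
          omega
      · intro x hx y hy hxy
        by_cases hxa : x = a <;> by_cases hya : y = a
        · subst hxa; subst hya; exact Or.inl le_rfl
        · simp only [if_pos hxa, if_neg hya] at hxy
          have := hg2lt y (Finset.mem_erase.2 ⟨hya, hy⟩)
          omega
        · simp only [if_neg hxa, if_pos hya] at hxy
          have := hg2lt x (Finset.mem_erase.2 ⟨hxa, hx⟩)
          omega
        · simp only [if_neg hxa, if_neg hya] at hxy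
          exact hg2comp x (Finset.mem_erase.2 ⟨hxa, hx⟩) y (Finset.mem_erase.2 ⟨hya, hy⟩) hxy

end Aux
section Grid
variable {t n : ℕ}

def rk (f : Fin n → Fin t) : ℕ := ∑ i, (f i : ℕ)

lemma rk_lt_rk {f g : Fin n → Fin t} (h : f < g) : rk f < rk g := by
  rw [Pi.lt_def] at h
  obtain ⟨hle, i, hi⟩ := h
  exact Finset.sum_lt_sum (fun j _ => Fin.le_def.1 (hle j))
    ⟨i, Finset.mem_univ i, Fin.lt_def.1 hi⟩

lemma rk_le (f : Fin n → Fin t) : rk f ≤ (t - 1) * n := by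
  calc rk f ≤ ∑ _i : Fin n, (t - 1) := by
        refine Finset.sum_le_sum (fun i _ => ?_)
        have := (f i).isLt
        omega
    _ = (t - 1) * n := by
        simp [Finset.sum_const, Finset.card_univ, Nat.mul_comm]

lemma exists_between_rk {f g : Fin n → Fin t} (hfg : f < g) (hr : rk f + 1 < rk g) :
    ∃ h, f < h ∧ h < g := by
  obtain ⟨hle, i, hi⟩ := Pi.lt_def.1 hfg
  have hi' : (f i : ℕ) < (g i : ℕ) := Fin.lt_def.1 hi
  have h1 : (f i : ℕ) + 1 < t := by have := (g i).isLt; omega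
  set h : Fin n → Fin t := Function.update f i ⟨(f i : ℕ) + 1, h1⟩ with hdef
  have hval : ∀ j, (h j : ℕ) = (f j : ℕ) + (if j = i then 1 else 0) := by
    intro j
    by_cases hj : j = i
    · subst hj; simp [hdef]
    · simp [hdef, Function.update_apply, hj]
  have hrk : rk h = rk f + 1 := by
    unfold rk
    simp only [hval, Finset.sum_add_distrib, Finset.sum_ite_eq' Finset.univ i,
      Finset.mem_univ, if_true]
  have hfh : f ≤ h := by
    intro j
    rw [Fin.le_def, hval j]
    omega
  have hhg : h ≤ g := by
    intro j
    rw [Fin.le_def, hval j]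
    by_cases hj : j = i
    · subst hj; simpa using hi'
    · simp only [if_neg hj, add_zero]; exact Fin.le_def.1 (hle j)
  refine ⟨h, lt_of_le_of_ne hfh ?_, lt_of_le_of_ne hhg ?_⟩
  · intro e; rw [← e] at hrk; omega
  · intro e; rw [e] at hrk; omega

lemma maxchain_card (ht : 0 < t) (M : Set (Fin n → Fin t)) (hM : IsMaxChain (· ≤ ·) M) :
    M.ncard = (t - 1) * n + 1 ∧ (fun _ => (⟨0, ht⟩ : Fin t)) ∈ M ∧
      (fun _ => (⟨t - 1, by omega⟩ : Fin t)) ∈ M := by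
  classical
  set b : Fin n → Fin t := fun _ => ⟨0, ht⟩ with hbdef
  set T : Fin n → Fin t := fun _ => ⟨t - 1, by omega⟩ with hTdef
  have hble : ∀ f : Fin n → Fin t, b ≤ f := fun f j => by
    rw [Fin.le_def]; exact Nat.zero_le _
  have hleT : ∀ f : Fin n → Fin t, f ≤ T := fun f j => by
    rw [Fin.le_def]; have := (f j).isLt; simp only [hTdef]; omega
  have hbM : b ∈ M := by
    have hc : IsChain (· ≤ ·) (insert b M) :=
      hM.1.insert (fun c hc _ => Or.inl (hble c))
    have := hM.2 hc (Set.subset_insert _ _)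
    rw [this]; exact Set.mem_insert _ _
  have hTM : T ∈ M := by
    have hc : IsChain (· ≤ ·) (insert T M) :=
      hM.1.insert (fun c hc _ => Or.inr (hleT c))
    have := hM.2 hc (Set.subset_insert _ _)
    rw [this]; exact Set.mem_insert _ _
  have hrkb : rk b = 0 := by simp [rk, hbdef]
  have hrkT : rk T = (t - 1) * n := by
    simp [rk, hTdef, Finset.sum_const, Finset.card_univ, Nat.mul_comm]
  have hMfin : M.Finite := Set.toFinite M
  have hcomp : ∀ x ∈ M, ∀ y ∈ M, x ≤ y ∨ y ≤ x := by
    intro x hx y hy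
    by_cases hxy : x = y
    · exact Or.inl hxy.le
    · exact hM.1 hx hy hxy
  have hinj : Set.InjOn rk M := by
    intro x hx y hy hxy
    by_contra hne
    rcases hcomp x hx y hy with h | h
    · have := rk_lt_rk (lt_of_le_of_ne h hne); omega
    · have := rk_lt_rk (lt_of_le_of_ne h (Ne.symm hne)); omega
  have hsurj : ∀ m, m ≤ (t - 1) * n → ∃ x ∈ M, rk x = m := by
    intro m hm
    by_contra hno
    push_neg at hno
    have hm0 : 0 < m := by
      rcases Nat.eq_zero_or_pos m with rfl | h
      · exact absurd hrkb (hno b hbM)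
      · exact h
    have hmN : m < (t - 1) * n := by
      rcases Nat.lt_or_ge m ((t - 1) * n) with h | h
      · exact h
      · have h2 : m = (t - 1) * n := by omega
        exact absurd (hrkT.trans h2.symm) (hno T hTM)
    set LoF : Finset (Fin n → Fin t) := hMfin.toFinset.filter (fun x => rk x < m) with hLo
    set HiF : Finset (Fin n → Fin t) := hMfin.toFinset.filter (fun x => m < rk x) with hHi
    have hLoM : ∀ x ∈ LoF, x ∈ M ∧ rk x < m := fun x hx => by
      have := Finset.mem_filter.1 hx
      exact ⟨hMfin.mem_toFinset.1 this.1, this.2⟩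
    have hHiM : ∀ x ∈ HiF, x ∈ M ∧ m < rk x := fun x hx => by
      have := Finset.mem_filter.1 hx
      exact ⟨hMfin.mem_toFinset.1 this.1, this.2⟩
    have hsplit : ∀ x ∈ M, x ∈ LoF ∨ x ∈ HiF := by
      intro x hx
      have hne := hno x hx
      rcases Nat.lt_or_ge (rk x) m with h | h
      · exact Or.inl (Finset.mem_filter.2 ⟨hMfin.mem_toFinset.2 hx, h⟩)
      · exact Or.inr (Finset.mem_filter.2 ⟨hMfin.mem_toFinset.2 hx, by omega⟩)
    obtain ⟨f0, hf0, hf0max⟩ := chain_greatest LoF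
      ⟨b, Finset.mem_filter.2 ⟨hMfin.mem_toFinset.2 hbM, by omega⟩⟩
      (fun x hx y hy => hcomp x (hLoM x hx).1 y (hLoM y hy).1)
    obtain ⟨g0, hg0, hg0min⟩ := chain_least HiF
      ⟨T, Finset.mem_filter.2 ⟨hMfin.mem_toFinset.2 hTM, by omega⟩⟩
      (fun x hx y hy => hcomp x (hHiM x hx).1 y (hHiM y hy).1)
    obtain ⟨hf0M, hf0r⟩ := hLoM f0 hf0
    obtain ⟨hg0M, hg0r⟩ := hHiM g0 hg0
    have hfg : f0 < g0 := by
      rcases hcomp f0 hf0M g0 hg0M with h | h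
      · refine lt_of_le_of_ne h (fun e => ?_)
        rw [e] at hf0r; omega
      · rcases eq_or_lt_of_le h with h' | h'
        · rw [h'] at hg0r; omega
        · have := rk_lt_rk h'; omega
    obtain ⟨h, hfh, hhg⟩ := exists_between_rk hfg (by omega)
    have hhM : h ∉ M := by
      intro hmem
      rcases hsplit h hmem with hx | hx
      · exact absurd (hf0max h hx) (not_le_of_gt hfh)
      · exact absurd (hg0min h hx) (not_le_of_gt hhg)
    have hc : IsChain (· ≤ ·) (insert h M) := by
      refine hM.1.insert (fun c hc hne => ?_)
      rcases hsplit c hc with hx | hx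
      · exact Or.inr ((hf0max c hx).trans hfh.le)
      · exact Or.inl (hhg.le.trans (hg0min c hx))
    have := hM.2 hc (Set.subset_insert _ _)
    exact hhM (this ▸ Set.mem_insert _ _)
  have himg : rk '' M = Set.Iic ((t - 1) * n) := by
    apply Set.eq_of_subset_of_subset
    · rintro m ⟨x, hx, rfl⟩
      exact Set.mem_Iic.2 (rk_le x)
    · intro m hm
      obtain ⟨x, hx, hxr⟩ := hsurj m (Set.mem_Iic.1 hm)
      exact ⟨x, hx, hxr⟩
  have : M.ncard = (t - 1) * n + 1 := by
    rw [← Set.ncard_image_of_injOn hinj, himg, ← Finset.coe_Iic, Set.ncard_coe_finset,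
      Nat.card_Iic]
  exact ⟨this, hbM, hTM⟩

end Grid
lemma ncard_iUnion_le' {β : Type*} {m : ℕ} (f : Fin m → Set β) :
    (⋃ j, f j).ncard ≤ ∑ j, (f j).ncard := by
  induction m with
  | zero => simp
  | succ m ih =>
    rw [Fin.sum_univ_succ]
    have h : (⋃ j, f j) = f 0 ∪ ⋃ j : Fin m, f j.succ := by
      ext x
      simp only [Set.mem_iUnion, Set.mem_union]
      exact ⟨fun ⟨j, hj⟩ => by
        rcases Fin.eq_zero_or_eq_succ j with rfl | ⟨j', rfl⟩
        · exact Or.inl hj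
        · exact Or.inr ⟨j', hj⟩,
        fun h => h.elim (fun h => ⟨0, h⟩) (fun ⟨j, hj⟩ => ⟨j.succ, hj⟩)⟩
    rw [h]
    exact (Set.ncard_union_le _ _).trans (add_le_add le_rfl (ih _))

theorem stmt19 (t k n : ℕ) (ht : 2 ≤ t) (hk : 2 ≤ k) (hn : k < n)
    (F : Set (Fin n → Fin t)) (hsat : PSaturated (AC k) F) :
    (∃ C : Fin (k - 1) → Set (Fin n → Fin t),
      (∀ j, IsMaxChain (· ≤ ·) (C j)) ∧ F = ⋃ j, C j) ∧
    (t - 1) * n + 1 ≤ F.ncard ∧ F.ncard ≤ (k - 1) * ((t - 1) * n) - k + 3 := by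
  classical
  have htpos : 0 < t := by omega
  have hACle : ∀ x y : AC k, x ≤ y ↔ x = y := fun _ _ => Iff.rfl
  -- Step 1: F has no antichain of size ≥ k
  have hfree : ∀ A : Finset (Fin n → Fin t), ↑A ⊆ F →
      IsAntichain (· ≤ ·) (A : Set (Fin n → Fin t)) → A.card ≤ k - 1 := by
    intro A hAF hAanti
    by_contra hlt
    push_neg at hlt
    have hkA : k ≤ A.card := by omega
    obtain ⟨B, hBA, hBcard⟩ := Finset.exists_subset_card_eq hkA
    have hBanti : IsAntichain (· ≤ ·) (B : Set (Fin n → Fin t)) :=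
      hAanti.subset (by exact_mod_cast hBA)
    set e := B.equivFin with hedef
    set φ : AC k → (Fin n → Fin t) := fun i => (e.symm (Fin.cast hBcard.symm i) : _) with hφdef
    have hmemB : ∀ i : AC k, φ i ∈ B := fun i => (e.symm (Fin.cast hBcard.symm i)).2
    have hinj : Function.Injective φ := by
      intro x y hxy
      have h1 : e.symm (Fin.cast hBcard.symm x) = e.symm (Fin.cast hBcard.symm y) :=
        Subtype.ext hxy
      have h2 := e.symm.injective h1
      exact (Fin.cast_inj hBcard.symm).1 h2
    apply hsat.1
    refine ⟨φ, hinj, fun i => hAF (Finset.mem_coe.2 (hBA (hmemB i))), fun x y => ?_⟩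
    rw [hACle x y]
    constructor
    · intro hle
      by_contra hne
      exact hBanti (hmemB x) (hmemB y) (fun e' => hne (hinj e')) hle
    · rintro rfl; exact le_rfl
  -- Step 2: saturation gives, for each g ∉ F, a (k-1)-antichain in F incomparable to g
  have hsat2 : ∀ g, g ∉ F → ∃ A : Finset (Fin n → Fin t), ↑A ⊆ F ∧
      IsAntichain (· ≤ ·) (A : Set (Fin n → Fin t)) ∧ A.card = k - 1 ∧
      ∀ x ∈ A, ¬ x ≤ g ∧ ¬ g ≤ x := by
    intro g hg
    obtain ⟨φ, hinj, hmem, hord⟩ := hsat.2 g hg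
    set ψ : Fin k → (Fin n → Fin t) := fun i => φ i with hψdef
    have hinjψ : Function.Injective ψ := fun x y h => hinj h
    have hpair : ∀ x y : Fin k, x ≠ y → ¬ ψ x ≤ ψ y :=
      fun x y hxy hle => hxy ((hACle x y).1 ((hord x y).1 hle))
    have hex : ∃ x : Fin k, ψ x = g := by
      by_contra hno
      push_neg at hno
      have hmem' : ∀ x : Fin k, ψ x ∈ F := fun x => by
        rcases hmem x with h | h
        · exact absurd h (hno x)
        · exact h
      set A : Finset (Fin n → Fin t) := Finset.image ψ Finset.univ with hAdef
      have hAcard : A.card = k := by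
        rw [hAdef, Finset.card_image_of_injective _ hinjψ, Finset.card_univ, Fintype.card_fin]
      have hAF : ↑A ⊆ F := by
        intro x hx
        obtain ⟨i, _, rfl⟩ := Finset.mem_image.1 (Finset.mem_coe.1 hx)
        exact hmem' i
      have hAanti : IsAntichain (· ≤ ·) (A : Set (Fin n → Fin t)) := by
        intro x hx y hy hne hle
        obtain ⟨i, _, rfl⟩ := Finset.mem_image.1 (Finset.mem_coe.1 hx)
        obtain ⟨j, _, rfl⟩ := Finset.mem_image.1 (Finset.mem_coe.1 hy)
        exact hpair i j (fun h => hne (by rw [h])) hle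
      have := hfree A hAF hAanti
      omega
    obtain ⟨x0, hx0⟩ := hex
    refine ⟨Finset.image ψ (Finset.univ.erase x0), ?_, ?_, ?_, ?_⟩
    · intro x hx
      obtain ⟨i, hi, rfl⟩ := Finset.mem_image.1 (Finset.mem_coe.1 hx)
      have hix0 : i ≠ x0 := (Finset.mem_erase.1 hi).1
      rcases hmem i with h | h
      · exact absurd (h.trans hx0.symm) (fun h' => hix0 (hinjψ h'))
      · exact h
    · intro x hx y hy hne hle
      obtain ⟨i, _, rfl⟩ := Finset.mem_image.1 (Finset.mem_coe.1 hx)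
      obtain ⟨j, _, rfl⟩ := Finset.mem_image.1 (Finset.mem_coe.1 hy)
      exact hpair i j (fun h => hne (by rw [h])) hle
    · rw [Finset.card_image_of_injective _ hinjψ, Finset.card_erase_of_mem (Finset.mem_univ _),
        Finset.card_univ, Fintype.card_fin]
    · intro x hx
      obtain ⟨i, hi, rfl⟩ := Finset.mem_image.1 hx
      have hix0 : i ≠ x0 := (Finset.mem_erase.1 hi).1
      constructor
      · rw [← hx0]; exact hpair i x0 hix0
      · rw [← hx0]; exact hpair x0 i (Ne.symm hix0)
  -- Step 3: bot ∈ F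
  have hbF : (fun _ => (⟨0, htpos⟩ : Fin t)) ∈ F := by
    by_contra hb
    obtain ⟨A, hAF, hAanti, hAcard, hAinc⟩ := hsat2 _ hb
    have hne : A.Nonempty := Finset.card_pos.1 (by omega)
    obtain ⟨x, hx⟩ := hne
    exact (hAinc x hx).2 (fun j => by rw [Fin.le_def]; exact Nat.zero_le _)
  have hFfin : F.Finite := Set.toFinite F
  have hFne : F.Nonempty := ⟨_, hbF⟩
  -- Step 4: Dilworth decomposition
  obtain ⟨gc, hgclt0, hgccomp0⟩ := dilworth hFfin.toFinset (k - 1)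
    (fun A hA hanti => hfree A (fun x hx => hFfin.mem_toFinset.1 (hA (Finset.mem_coe.1 hx))) hanti)
  have hgclt : ∀ x ∈ F, gc x < k - 1 := fun x hx => hgclt0 x (hFfin.mem_toFinset.2 hx)
  have hgccomp : ∀ x ∈ F, ∀ y ∈ F, gc x = gc y → x ≤ y ∨ y ≤ x := fun x hx y hy =>
    hgccomp0 x (hFfin.mem_toFinset.2 hx) y (hFfin.mem_toFinset.2 hy)
  set D : Fin (k - 1) → Set (Fin n → Fin t) :=
    fun j => {x | x ∈ F ∧ gc x = (j : ℕ)} with hDdef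
  have hDchain : ∀ j, IsChain (· ≤ ·) (D j) := by
    intro j x hx y hy _
    exact hgccomp x hx.1 y hy.1 (hx.2.trans hy.2.symm)
  have hFD : F ⊆ ⋃ j, D j := by
    intro x hx
    exact Set.mem_iUnion.2 ⟨⟨gc x, hgclt x hx⟩, hx, rfl⟩
  -- Step 5: every (k-1)-antichain meets every color class
  have hmeet : ∀ A : Finset (Fin n → Fin t), ↑A ⊆ F →
      IsAntichain (· ≤ ·) (A : Set (Fin n → Fin t)) → A.card = k - 1 →
      ∀ j : Fin (k - 1), ∃ x ∈ A, gc x = (j : ℕ) := by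
    intro A hAF hAanti hAcard j
    by_contra hno
    push_neg at hno
    have hinj : Set.InjOn gc A := by
      intro x hx y hy hxy
      by_contra hne
      rcases hgccomp x (hAF hx) y (hAF hy) hxy with h | h
      · exact hAanti hx hy hne h
      · exact hAanti hy hx (Ne.symm hne) h
    have himg : A.image gc ⊆ (Finset.range (k - 1)).erase (j : ℕ) := by
      intro m hm
      obtain ⟨x, hx, rfl⟩ := Finset.mem_image.1 hm
      exact Finset.mem_erase.2 ⟨fun h => hno x hx h,
        Finset.mem_range.2 (hgclt x (hAF (Finset.mem_coe.2 hx)))⟩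
    have h1 := Finset.card_le_card himg
    rw [Finset.card_image_of_injOn hinj, hAcard] at h1
    have h2 : ((Finset.range (k - 1)).erase (j : ℕ)).card = k - 1 - 1 := by
      rw [Finset.card_erase_of_mem (Finset.mem_range.2 j.isLt), Finset.card_range]
    omega
  -- Step 6: extend to maximal chains
  choose M hMmax hDM using fun j => (hDchain j).exists_maxChain
  have hMF : ∀ j, M j ⊆ F := by
    intro j g hgM
    by_contra hgF
    obtain ⟨A, hAF, hAanti, hAcard, hAinc⟩ := hsat2 g hgF
    obtain ⟨x, hxA, hgcx⟩ := hmeet A hAF hAanti hAcard j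
    have hxM : x ∈ M j := hDM j ⟨hAF (Finset.mem_coe.2 hxA), hgcx⟩
    have hne : x ≠ g := fun e => hgF (e ▸ hAF (Finset.mem_coe.2 hxA))
    rcases (hMmax j).1 hxM hgM hne with h | h
    · exact (hAinc x hxA).1 h
    · exact (hAinc x hxA).2 h
  have hFM : F = ⋃ j, M j :=
    Set.Subset.antisymm (hFD.trans (Set.iUnion_mono hDM)) (Set.iUnion_subset hMF)
  have hMcard := fun j => maxchain_card htpos (M j) (hMmax j)
  refine ⟨⟨M, hMmax, hFM⟩, ?_, ?_⟩
  · -- lower bound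
    have hk1 : 0 < k - 1 := by omega
    have h1 := (hMcard ⟨0, hk1⟩).1
    have h2 := Set.ncard_le_ncard (hMF ⟨0, hk1⟩) hFfin
    omega
  · -- upper bound
    set b : Fin n → Fin t := fun _ => ⟨0, htpos⟩ with hbdef
    set Tt : Fin n → Fin t := fun _ => ⟨t - 1, by omega⟩ with hTdef
    have hbT : b ≠ Tt := by
      intro e
      have h0 := congrArg Fin.val (congrFun e ⟨0, by omega⟩)
      simp only [hbdef, hTdef] at h0
      omega
    have hMj2 : ∀ j, ((M j) \ {b, Tt}).ncard = (t - 1) * n - 1 := by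
      intro j
      have hsub : ({b, Tt} : Set (Fin n → Fin t)) ⊆ M j := by
        rintro x (rfl | rfl)
        · exact (hMcard j).2.1
        · exact (hMcard j).2.2
      rw [Set.ncard_diff hsub (Set.toFinite _), (hMcard j).1, Set.ncard_pair hbT]
      omega
    have hdiffeq : F \ {b, Tt} = ⋃ j, (M j \ {b, Tt}) := by
      rw [hFM, Set.iUnion_diff]
    have hU : (⋃ j, (M j \ ({b, Tt} : Set (Fin n → Fin t)))).ncard ≤
        (k - 1) * ((t - 1) * n - 1) := by
      have hsum : ∑ j, (M j \ ({b, Tt} : Set (Fin n → Fin t))).ncard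
          = (k - 1) * ((t - 1) * n - 1) := by
        rw [Finset.sum_congr rfl (fun j _ => hMj2 j), Finset.sum_const, Finset.card_univ,
          Fintype.card_fin, smul_eq_mul]
      exact le_of_eq (hsum ▸ rfl) |>.trans' (ncard_iUnion_le' _) |>.trans (le_of_eq rfl)
    have h3 : F.ncard ≤ (F \ ({b, Tt} : Set (Fin n → Fin t))).ncard + 2 := by
      have h4 := Set.ncard_le_ncard_diff_add_ncard F {b, Tt} (Set.toFinite _)
      have h5 : ({b, Tt} : Set (Fin n → Fin t)).ncard = 2 := Set.ncard_pair hbT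
      omega
    have hdist : (k - 1) * ((t - 1) * n - 1) = (k - 1) * ((t - 1) * n) - (k - 1) := by
      rw [Nat.mul_sub, mul_one]
    rw [hdiffeq] at h3
    omega
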